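/- arXiv:1401.7619 — 3 statements merged into one kernel-verified Lean document; each statement's English description precedes it below -/
import Mathlib

section
/- Let H and Q be Hilbert spaces, A : H × H → ℝ and B : H × Q → ℝ bounded bilinear forms, and V = {v ∈ H : B(v,μ) = 0 for all μ ∈ Q}. If A is coercive on V (A(v,v) ≥ α‖v‖² for all v ∈ V) and B satisfies the inf-sup condition sup_{v ≠ 0} B(v,μ)/‖v‖_H ≥ c‖μ‖_Q for all μ ∈ Q with c > 0, then for all bounded linear functionals F on H and G on Q there exists a unique pair (u,λ) ∈ H × Q with A(u,v) + B(v,λ) = F(v) for all v ∈ H and B(u,μ) = G(μ) for all μ ∈ Q. -/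
open InnerProductSpace ContinuousLinearMap RealInnerProductSpace

noncomputable def rieszOpAux {E F : Type*} [NormedAddCommGroup E] [InnerProductSpace ℝ E]
    [NormedAddCommGroup F] [InnerProductSpace ℝ F] [CompleteSpace F]
    (T : E →L[ℝ] F →L[ℝ] ℝ) : E →L[ℝ] F :=
  LinearMap.mkContinuous
    { toFun := fun u => (InnerProductSpace.toDual ℝ F).symm (T u)
      map_add' := fun x y => by simp
      map_smul' := fun r x => by simp }
    ‖T‖ (fun u => by
      simp only [LinearMap.coe_mk, AddHom.coe_mk, LinearIsometryEquiv.norm_map]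
      exact T.le_opNorm u)

theorem rieszOpAux_apply {E F : Type*} [NormedAddCommGroup E] [InnerProductSpace ℝ E]
    [NormedAddCommGroup F] [InnerProductSpace ℝ F] [CompleteSpace F]
    (T : E →L[ℝ] F →L[ℝ] ℝ) (u : E) (w : F) : ⟪rieszOpAux T u, w⟫_ℝ = T u w :=
  InnerProductSpace.toDual_symm_apply

set_option maxHeartbeats 2000000 in
/-- Babuska–Brezzi saddle-point theorem. -/
theorem babuska_brezzi (H Q : Type*)
    [NormedAddCommGroup H] [InnerProductSpace ℝ H] [CompleteSpace H]
    [NormedAddCommGroup Q] [InnerProductSpace ℝ Q] [CompleteSpace Q]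
    (A : H →ₗ[ℝ] H →ₗ[ℝ] ℝ) (B : H →ₗ[ℝ] Q →ₗ[ℝ] ℝ)
    (CA CB : ℝ)
    (hAbound : ∀ u v : H, |A u v| ≤ CA * ‖u‖ * ‖v‖)
    (hBbound : ∀ (v : H) (μ : Q), |B v μ| ≤ CB * ‖v‖ * ‖μ‖)
    (α : ℝ) (hα : 0 < α)
    (hcoercive : ∀ v : H, (∀ μ : Q, B v μ = 0) → α * ‖v‖ ^ 2 ≤ A v v)
    (c : ℝ) (hc : 0 < c)
    (hinfsup : ∀ μ : Q, c * ‖μ‖ ≤ sSup {r : ℝ | ∃ v : H, v ≠ 0 ∧ r = B v μ / ‖v‖})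
    (F : H →L[ℝ] ℝ) (G : Q →L[ℝ] ℝ) :
    ∃! p : H × Q,
      (∀ v : H, A p.1 v + B v p.2 = F v) ∧ (∀ μ : Q, B p.1 μ = G μ) := by
  classical
  -- continuous versions of the bilinear forms
  set A₂ : H →L[ℝ] H →L[ℝ] ℝ := LinearMap.mkContinuous₂ A CA (by simpa using hAbound) with hA₂
  set B₂ : H →L[ℝ] Q →L[ℝ] ℝ := LinearMap.mkContinuous₂ B CB (by simpa using hBbound) with hB₂
  have hA₂app : ∀ u v : H, A₂ u v = A u v := fun u v => rfl
  have hB₂app : ∀ (v : H) (μ : Q), B₂ v μ = B v μ := fun v μ => rfl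
  -- Riesz representations
  set a : H →L[ℝ] H := rieszOpAux A₂ with ha
  set b : H →L[ℝ] Q := rieszOpAux B₂ with hb
  have hInnerA : ∀ u v : H, ⟪a u, v⟫_ℝ = A u v := fun u v => rieszOpAux_apply A₂ u v
  have hInnerB : ∀ (v : H) (μ : Q), ⟪b v, μ⟫_ℝ = B v μ := fun v μ => rieszOpAux_apply B₂ v μ
  clear_value A₂ B₂
  clear_value a b
  set b' : Q →L[ℝ] H := ContinuousLinearMap.adjoint b with hb'
  have hInnerB' : ∀ (μ : Q) (v : H), ⟪b' μ, v⟫_ℝ = B v μ := by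
    intro μ v
    rw [hb', ContinuousLinearMap.adjoint_inner_left, real_inner_comm, hInnerB]
  -- the adjoint is bounded below
  have hbelow : ∀ μ : Q, c * ‖μ‖ ≤ ‖b' μ‖ := by
    intro μ
    refine le_trans (hinfsup μ) (Real.sSup_le ?_ (norm_nonneg _))
    rintro r ⟨v, hv, rfl⟩
    rw [← hInnerB' μ v, div_le_iff₀ (norm_pos_iff.2 hv)]
    exact real_inner_le_norm _ _
  clear_value b'
  -- b ∘ b' is coercive, hence invertible (Lax–Milgram)
  set T : Q →L[ℝ] Q := b.comp b' with hT
  have hTapp : ∀ μ : Q, T μ = b (b' μ) := fun μ => rfl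
  clear_value T
  set BT : Q →L[ℝ] Q →L[ℝ] ℝ := (innerSL ℝ (E := Q)).comp T with hBT
  have hBTapp : ∀ μ ν : Q, BT μ ν = ⟪T μ, ν⟫_ℝ := fun μ ν => rfl
  clear_value BT
  have hTcoercive : IsCoercive BT := by
    refine ⟨c ^ 2, by positivity, fun μ => ?_⟩
    have h1 : BT μ μ = ‖b' μ‖ ^ 2 := by
      rw [hBTapp, hTapp, hInnerB, ← hInnerB' μ (b' μ), real_inner_self_eq_norm_sq]
    have h2 : (c * ‖μ‖) ^ 2 ≤ ‖b' μ‖ ^ 2 :=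
      pow_le_pow_left₀ (by positivity) (hbelow μ) 2
    have h3 : (c * ‖μ‖) ^ 2 = c ^ 2 * ‖μ‖ * ‖μ‖ := by ring
    rw [h1]
    linarith [h2, h3]
  set Teq := hTcoercive.continuousLinearEquivOfBilin with hTeq
  have hTeqT : ∀ μ : Q, Teq μ = T μ := by
    intro μ
    apply ext_inner_right ℝ
    intro ν
    rw [hTeq, IsCoercive.continuousLinearEquivOfBilin_apply, hBTapp]
  clear_value Teq
  -- V = ker b
  set V : Submodule ℝ H := LinearMap.ker (b : H →ₗ[ℝ] Q) with hV
  have hVmem : ∀ v : H, v ∈ V ↔ (∀ μ : Q, B v μ = 0) := by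
    intro v
    rw [hV, LinearMap.mem_ker, ContinuousLinearMap.coe_coe]
    constructor
    · intro hv μ
      rw [← hInnerB v μ, hv, inner_zero_left]
    · intro hv
      apply ext_inner_right ℝ
      intro μ
      rw [hInnerB, hv μ, inner_zero_left]
  haveI : CompleteSpace V := by rw [hV]; exact b.isClosed_ker.completeSpace_coe
  -- coercive bilinear form on V
  set AV : V →L[ℝ] V →L[ℝ] ℝ := ((A₂.comp V.subtypeL).flip.comp V.subtypeL).flip with hAV
  have hAVapp : ∀ v w : V, AV v w = A (v : H) (w : H) := fun v w => hA₂app _ _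
  clear_value AV
  have hAVcoercive : IsCoercive AV := by
    refine ⟨α, hα, fun v => ?_⟩
    have h1 := hcoercive (v : H) ((hVmem (v : H)).1 v.2)
    have h2 : ‖v‖ = ‖(v : H)‖ := rfl
    rw [hAVapp, h2]
    have h3 : α * ‖(v : H)‖ * ‖(v : H)‖ = α * ‖(v : H)‖ ^ 2 := by ring
    linarith [h1]
  set AVeq := hAVcoercive.continuousLinearEquivOfBilin with hAVeq
  have hAVeqApp : ∀ (v w : V), ⟪AVeq v, w⟫_ℝ = AV v w := fun v w =>
    hAVcoercive.continuousLinearEquivOfBilin_apply v w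
  clear_value AVeq
  -- data
  set f : H := (toDual ℝ H).symm F with hf
  set g : Q := (toDual ℝ Q).symm G with hg
  have hfApp : ∀ v : H, ⟪f, v⟫_ℝ = F v := fun v => toDual_symm_apply
  have hgApp : ∀ μ : Q, ⟪g, μ⟫_ℝ = G μ := fun μ => toDual_symm_apply
  clear_value f g
  -- first part of solution
  set u₁ : H := b' (Teq.symm g) with hu₁
  have hbu₁ : b u₁ = g := by
    have h0 := hTeqT (Teq.symm g)
    rw [Teq.apply_symm_apply, hTapp] at h0
    rw [hu₁]
    exact h0.symm
  clear_value u₁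
  -- second part: solve on V
  set ℓ : H := f - a u₁ with hℓ
  have hℓApp : ∀ w : H, ⟪ℓ, w⟫_ℝ = ⟪f, w⟫_ℝ - ⟪a u₁, w⟫_ℝ := by
    intro w; rw [hℓ, inner_sub_left]
  clear_value ℓ
  set u₀ : V := AVeq.symm ((V.orthogonalProjectionOnto) ℓ) with hu₀
  have hu₀prop : ∀ w : V, A (u₀ : H) (w : H) = ⟪ℓ, (w : H)⟫_ℝ := by
    intro w
    have h1 := hAVeqApp u₀ w
    rw [hu₀, AVeq.apply_symm_apply, ← hu₀] at h1
    have h2 : ⟪(V.orthogonalProjectionOnto ℓ), w⟫_ℝ = ⟪ℓ, (w : H)⟫_ℝ :=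
      Submodule.inner_orthogonalProjectionOnto_eq_of_mem_right w ℓ
    rw [← hAVapp, ← h1, h2]
  clear_value u₀
  set u : H := u₁ + (u₀ : H) with hu
  clear_value u
  set r : H := f - a u with hr
  have hrApp : ∀ w : H, ⟪r, w⟫_ℝ = ⟪f, w⟫_ℝ - ⟪a u, w⟫_ℝ := by
    intro w; rw [hr, inner_sub_left]
  have hrV : ∀ w : H, w ∈ V → ⟪r, w⟫_ℝ = 0 := by
    intro w hw
    have h1 : A (u₀ : H) w = ⟪ℓ, w⟫_ℝ := hu₀prop ⟨w, hw⟩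
    have h3 : a u = a u₁ + a (u₀ : H) := by rw [hu, map_add]
    rw [hrApp, h3, inner_add_left]
    have h4 : ⟪a (u₀ : H), w⟫_ℝ = ⟪ℓ, w⟫_ℝ := by rw [hInnerA]; exact h1
    linarith [hℓApp w, h4]
  clear_value r
  -- the multiplier
  set lam : Q := Teq.symm (b r) with hlam
  have hblam : b' lam = r := by
    have hT1 : b (b' lam) = b r := by
      have h0 := hTeqT (Teq.symm (b r))
      rw [Teq.apply_symm_apply, hTapp] at h0
      rw [hlam]
      exact h0.symm
    have hmem : b' lam - r ∈ V := by
      rw [hV, LinearMap.mem_ker, ContinuousLinearMap.coe_coe, map_sub, hT1, sub_self]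
    have horth : ⟪b' lam - r, b' lam - r⟫_ℝ = 0 := by
      have h1 : ⟪b' lam, b' lam - r⟫_ℝ = 0 := by
        rw [hInnerB']
        exact ((hVmem _).1 hmem) lam
      have h2 : ⟪r, b' lam - r⟫_ℝ = 0 := hrV _ hmem
      rw [inner_sub_left, h1, h2, sub_self]
    exact sub_eq_zero.1 (inner_self_eq_zero.1 horth)
  clear_value lam
  have hbu : b u = g := by
    rw [hu, map_add, hbu₁]
    have h0 : b (u₀ : H) = 0 := by
      have hm := (hVmem _).1 u₀.2
      apply ext_inner_right ℝ
      intro μ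
      rw [hInnerB, hm μ, inner_zero_left]
    rw [h0, add_zero]
  have heq1 : ∀ v : H, A u v + B v lam = F v := by
    intro v
    rw [← hInnerA, ← hInnerB' lam v, hblam]
    have := hrApp v
    have := hfApp v
    linarith
  have heq2 : ∀ μ : Q, B u μ = G μ := by
    intro μ
    rw [← hInnerB, hbu, hgApp]
  refine ⟨(u, lam), ⟨heq1, heq2⟩, ?_⟩
  rintro ⟨u', lam'⟩ ⟨h1', h2'⟩
  have hd : ∀ μ : Q, B (u' - u) μ = 0 := by
    intro μ
    simp only [map_sub, LinearMap.sub_apply]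
    rw [h2' μ, heq2 μ, sub_self]
  have he : ∀ v : H, A (u' - u) v + B v (lam' - lam) = 0 := by
    intro v
    have e1 := h1' v
    have e2 := heq1 v
    simp only [map_sub, LinearMap.sub_apply]
    linarith
  have hAdd : A (u' - u) (u' - u) = 0 := by
    have h0 := he (u' - u)
    rw [hd (lam' - lam)] at h0
    linarith
  have hzero : u' = u := by
    have h0 := hcoercive (u' - u) hd
    rw [hAdd] at h0
    have h5 : ‖u' - u‖ ^ 2 ≤ 0 := by
      have h6 : α * ‖u' - u‖ ^ 2 ≤ α * 0 := by rw [mul_zero]; exact h0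
      exact (mul_le_mul_iff_right₀ hα).1 h6
    have h4 : ‖u' - u‖ = 0 := by
      have h7 : ‖u' - u‖ ^ 2 = 0 := le_antisymm h5 (sq_nonneg _)
      exact pow_eq_zero_iff (two_ne_zero) |>.1 h7
    exact sub_eq_zero.1 (norm_eq_zero.1 h4)
  have hlamzero : lam' = lam := by
    have hb'e : b' (lam' - lam) = 0 := by
      apply ext_inner_right ℝ
      intro v
      rw [hInnerB', inner_zero_left]
      have h0 := he v
      rw [hzero, sub_self, map_zero, LinearMap.zero_apply] at h0
      linarith
    have h0 := hbelow (lam' - lam)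
    rw [hb'e, norm_zero] at h0
    have h1 : ‖lam' - lam‖ = 0 := by
      have h6 : c * ‖lam' - lam‖ ≤ c * 0 := by rw [mul_zero]; exact h0
      exact le_antisymm ((mul_le_mul_iff_right₀ hc).1 h6) (norm_nonneg _)
    exact sub_eq_zero.1 (norm_eq_zero.1 h1)
  exact Prod.ext hzero hlamzero
end

section
/- (Céa's lemma) Under the hypotheses of Lax–Milgram with continuity constant α and coercivity constant β, if u solves the variational problem in V and u_h solves it in a subspace V_h, then ‖u - u_h‖ ≤ (α/β) inf_{v_h ∈ V_h} ‖u - v_h‖. -/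
/-- Céa's lemma: the Galerkin approximation is quasi-optimal,
`‖u - u_h‖ ≤ (α/β) · inf_{v_h ∈ V_h} ‖u - v_h‖`. -/
theorem cea_lemma (V : Type*) [NormedAddCommGroup V] [InnerProductSpace ℝ V]
    [CompleteSpace V] (A : V →ₗ[ℝ] V →ₗ[ℝ] ℝ) (α β : ℝ) (hα : 0 < α) (hβ : 0 < β)
    (hbound : ∀ u v : V, |A u v| ≤ α * ‖u‖ * ‖v‖)
    (hcoercive : ∀ v : V, β * ‖v‖ ^ 2 ≤ A v v)
    (F : V →L[ℝ] ℝ) (Vh : Submodule ℝ V)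
    (u : V) (hu : ∀ v : V, A u v = F v)
    (uh : V) (huh : uh ∈ Vh) (huhs : ∀ vh ∈ Vh, A uh vh = F vh) :
    ‖u - uh‖ ≤ (α / β) * ⨅ vh : Vh, ‖u - (vh : V)‖ := by
  -- Galerkin orthogonality
  have horth : ∀ w ∈ Vh, A (u - uh) w = 0 := by
    intro w hw
    have : A (u - uh) w = A u w - A uh w := by simp
    rw [this, hu w, huhs w hw]; ring
  -- key estimate for every vh ∈ Vh
  have key : ∀ vh ∈ Vh, ‖u - uh‖ ≤ (α / β) * ‖u - vh‖ := by
    intro vh hvh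
    rcases eq_or_ne (u - uh) 0 with he | he
    · rw [he, norm_zero]
      positivity
    · have hne : (0:ℝ) < ‖u - uh‖ := norm_pos_iff.mpr he
      have hsplit : A (u - uh) (u - uh) = A (u - uh) (u - vh) := by
        have : A (u - uh) (u - uh) = A (u - uh) (u - vh) + A (u - uh) (vh - uh) := by
          have : (u - uh) = (u - vh) + (vh - uh) := by abel
          nth_rewrite 2 [this]
          simp
          ring
        rw [this, horth (vh - uh) (Vh.sub_mem hvh huh)]; ring
      have hchain : β * ‖u - uh‖ ^ 2 ≤ α * ‖u - uh‖ * ‖u - vh‖ := by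
        calc β * ‖u - uh‖ ^ 2 ≤ A (u - uh) (u - uh) := hcoercive _
          _ = A (u - uh) (u - vh) := hsplit
          _ ≤ |A (u - uh) (u - vh)| := le_abs_self _
          _ ≤ α * ‖u - uh‖ * ‖u - vh‖ := hbound _ _
      rw [div_mul_eq_mul_div, le_div_iff₀ hβ]
      nlinarith [hne]
  -- pass to the infimum
  have hne : Nonempty Vh := ⟨⟨0, Vh.zero_mem⟩⟩
  have hbdd : BddBelow (Set.range fun vh : Vh => ‖u - (vh : V)‖) :=
    ⟨0, by rintro x ⟨vh, rfl⟩; exact norm_nonneg _⟩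
  have hpos : (0:ℝ) < α / β := div_pos hα hβ
  have h1 : (β / α) * ‖u - uh‖ ≤ ⨅ vh : Vh, ‖u - (vh : V)‖ := by
    apply le_ciInf
    intro vh
    have := key vh vh.2
    calc (β / α) * ‖u - uh‖ ≤ (β / α) * ((α / β) * ‖u - (vh:V)‖) := by
          exact mul_le_mul_of_nonneg_left this (le_of_lt (div_pos hβ hα))
      _ = ‖u - (vh:V)‖ := by field_simp
  calc ‖u - uh‖ = (α / β) * ((β / α) * ‖u - uh‖) := by field_simp
    _ ≤ (α / β) * ⨅ vh : Vh, ‖u - (vh : V)‖ :=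
        mul_le_mul_of_nonneg_left h1 (le_of_lt hpos)
end

section
/- A polynomial of total degree at most 2 on a nondegenerate triangle is uniquely determined by its values at the three vertices and the three edge midpoints: if p has total degree ≤ 2 and vanishes at all three vertices a¹, a², a³ and all three midpoints a^{ij} = (aⁱ + aʲ)/2 of a triangle with affinely independent vertices, then p ≡ 0. -/
open MvPolynomial

noncomputable def Mono2 (i j : ℕ) : Fin 2 →₀ ℕ := Finsupp.single 0 i + Finsupp.single 1 j

lemma Mono2_ne {i j k l : ℕ} (h : ¬(i = k ∧ j = l)) : Mono2 i j ≠ Mono2 k l := by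
  intro he
  apply h
  have h0 := DFunLike.congr_fun he (0 : Fin 2)
  have h1 := DFunLike.congr_fun he (1 : Fin 2)
  simp [Mono2] at h0 h1
  exact ⟨h0, h1⟩

lemma evalform (p : MvPolynomial (Fin 2) ℝ) (hdeg : p.totalDegree ≤ 2) (v : Fin 2 → ℝ) :
    eval v p = coeff (Mono2 0 0) p + coeff (Mono2 1 0) p * v 0 + coeff (Mono2 0 1) p * v 1
      + coeff (Mono2 2 0) p * v 0 ^ 2 + coeff (Mono2 1 1) p * (v 0 * v 1)
      + coeff (Mono2 0 2) p * v 1 ^ 2 := by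
  have hS : p.support ⊆
      ({Mono2 0 0, Mono2 1 0, Mono2 0 1, Mono2 2 0, Mono2 1 1, Mono2 0 2} :
        Finset (Fin 2 →₀ ℕ)) := by
    intro m hm
    have hle : m 0 + m 1 ≤ 2 := by
      have := le_totalDegree hm
      have h2 : m.sum (fun _ e => e) = m 0 + m 1 := by
        rw [Finsupp.sum_fintype] <;> simp [Fin.sum_univ_two]
      omega
    have hme : m = Finsupp.single 0 (m 0) + Finsupp.single 1 (m 1) := by
      ext i; fin_cases i <;> simp
    have hb0 : m 0 ≤ 2 := by omega
    have hb1 : m 1 ≤ 2 := by omega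
    simp only [Finset.mem_insert, Finset.mem_singleton, Mono2]
    interval_cases h0 : m 0 <;> interval_cases h1 : m 1 <;> simp_all
  rw [eval_eq', Finset.sum_subset hS (by
    intro m _ hm; simp [MvPolynomial.notMem_support_iff.mp hm])]
  rw [Finset.sum_insert (by
        simp only [Finset.mem_insert, Finset.mem_singleton, not_or]
        exact ⟨Mono2_ne (by omega), Mono2_ne (by omega), Mono2_ne (by omega),
          Mono2_ne (by omega), Mono2_ne (by omega)⟩),
      Finset.sum_insert (by
        simp only [Finset.mem_insert, Finset.mem_singleton, not_or]
        exact ⟨Mono2_ne (by omega), Mono2_ne (by omega), Mono2_ne (by omega),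
          Mono2_ne (by omega)⟩),
      Finset.sum_insert (by
        simp only [Finset.mem_insert, Finset.mem_singleton, not_or]
        exact ⟨Mono2_ne (by omega), Mono2_ne (by omega), Mono2_ne (by omega)⟩),
      Finset.sum_insert (by
        simp only [Finset.mem_insert, Finset.mem_singleton, not_or]
        exact ⟨Mono2_ne (by omega), Mono2_ne (by omega)⟩),
      Finset.sum_insert (by
        simp only [Finset.mem_insert, Finset.mem_singleton, not_or]
        exact Mono2_ne (by omega)),
      Finset.sum_singleton]
  have happ : ∀ i j : ℕ, ∏ k : Fin 2, v k ^ (Mono2 i j) k = v 0 ^ i * v 1 ^ j := by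
    intro i j
    simp [Fin.prod_univ_two, Mono2]
  rw [happ, happ, happ, happ, happ, happ]
  ring

lemma zeroform (p : MvPolynomial (Fin 2) ℝ) (hdeg : p.totalDegree ≤ 2)
    (h : ∀ i j : ℕ, i + j ≤ 2 → coeff (Mono2 i j) p = 0) : p = 0 := by
  ext m
  rw [coeff_zero]
  by_cases hm : m ∈ p.support
  · have hle : m 0 + m 1 ≤ 2 := by
      have := le_totalDegree hm
      have h2 : m.sum (fun _ e => e) = m 0 + m 1 := by
        rw [Finsupp.sum_fintype] <;> simp [Fin.sum_univ_two]
      omega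
    have hme : m = Mono2 (m 0) (m 1) := by
      ext i; fin_cases i <;> simp [Mono2]
    rw [hme]; exact h _ _ hle
  · exact MvPolynomial.notMem_support_iff.mp hm

lemma det_ne (a : Fin 3 → (Fin 2 → ℝ)) (hindep : AffineIndependent ℝ a) :
    (a 1 0 - a 0 0) * (a 2 1 - a 0 1) - (a 1 1 - a 0 1) * (a 2 0 - a 0 0) ≠ 0 := by
  intro hD
  have key : ∀ lam mu : ℝ,
      (∀ i, lam * (a 1 i - a 0 i) + mu * (a 2 i - a 0 i) = 0) → lam = 0 ∧ mu = 0 := by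
    intro lam mu hlm
    have := affineIndependent_iff.mp hindep Finset.univ ![-(lam+mu), lam, mu]
      (by simp [Fin.sum_univ_three])
      (by
        rw [Fin.sum_univ_three]
        funext i
        have h1 := hlm i
        simp only [Matrix.cons_val_zero, Matrix.cons_val_one, Matrix.head_cons,
          Matrix.cons_val_two, Matrix.tail_cons, Pi.add_apply, Pi.smul_apply,
          smul_eq_mul, Pi.zero_apply]
        linarith)
    exact ⟨by simpa using this 1 (by simp), by simpa using this 2 (by simp)⟩
  by_cases h0 : a 1 0 - a 0 0 ≠ 0 ∨ a 2 0 - a 0 0 ≠ 0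
  · have := key (a 2 0 - a 0 0) (-(a 1 0 - a 0 0)) (by
      intro i
      fin_cases i <;> simp <;> nlinarith [hD])
    rcases h0 with h | h
    · exact h (by linarith [this.2])
    · exact h this.1
  · push_neg at h0
    by_cases h1 : a 1 1 - a 0 1 ≠ 0 ∨ a 2 1 - a 0 1 ≠ 0
    · have := key (a 2 1 - a 0 1) (-(a 1 1 - a 0 1)) (by
        intro i
        fin_cases i <;> simp <;> nlinarith [hD, h0.1, h0.2])
      rcases h1 with h | h
      · exact h (by linarith [this.2])
      · exact h this.1
    · push_neg at h1
      have : a 1 = a 0 := by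
        funext i; fin_cases i
        · simpa using by linarith [h0.1]
        · simpa using by linarith [h1.1]
      exact (by norm_num : (1:Fin 3) ≠ 0) (hindep.injective this)

/-- A polynomial of total degree at most 2 vanishing at the three vertices and
the three edge midpoints of a nondegenerate triangle vanishes identically. -/
theorem quadratic_determined_by_p2_nodes (p : MvPolynomial (Fin 2) ℝ)
    (hdeg : p.totalDegree ≤ 2) (a : Fin 3 → (Fin 2 → ℝ))
    (hindep : AffineIndependent ℝ a)
    (hvert : ∀ i, eval (a i) p = 0)
    (hmid : ∀ i j, i ≠ j → eval (midpoint ℝ (a i) (a j)) p = 0) :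
    p = 0 := by
  set c00 := coeff (Mono2 0 0) p with hc00d
  set c10 := coeff (Mono2 1 0) p with hc10d
  set c01 := coeff (Mono2 0 1) p with hc01d
  set c20 := coeff (Mono2 2 0) p with hc20d
  set c11 := coeff (Mono2 1 1) p with hc11d
  set c02 := coeff (Mono2 0 2) p with hc02d
  have hmv : ∀ i j : Fin 3, ∀ k : Fin 2,
      (midpoint ℝ (a i) (a j)) k = (a i k + a j k) / 2 := by
    intro i j k
    simp [midpoint_eq_smul_add, Pi.smul_apply]
    ring
  have hE : ∀ i : Fin 3, c00 + c10 * a i 0 + c01 * a i 1 + c20 * a i 0 ^ 2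
      + c11 * (a i 0 * a i 1) + c02 * a i 1 ^ 2 = 0 := by
    intro i; rw [← evalform p hdeg (a i)]; exact hvert i
  have hM : ∀ i j : Fin 3, i ≠ j →
      c00 + c10 * ((a i 0 + a j 0)/2) + c01 * ((a i 1 + a j 1)/2)
      + c20 * ((a i 0 + a j 0)/2) ^ 2 + c11 * (((a i 0 + a j 0)/2) * ((a i 1 + a j 1)/2))
      + c02 * ((a i 1 + a j 1)/2) ^ 2 = 0 := by
    intro i j hij
    have := hmid i j hij
    rw [evalform p hdeg] at this
    rw [← hmv i j 0, ← hmv i j 1]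
    exact this
  have hE0 := hE 0
  have hE1 := hE 1
  have hE2 := hE 2
  have hM01 := hM 0 1 (by decide)
  have hM02 := hM 0 2 (by decide)
  have hM12 := hM 1 2 (by decide)
  have hQu : c20 * (a 1 0 - a 0 0)^2 + c11 * ((a 1 0 - a 0 0) * (a 1 1 - a 0 1))
      + c02 * (a 1 1 - a 0 1)^2 = 0 := by
    linear_combination 2*hE0 + 2*hE1 - 4*hM01
  have hQv : c20 * (a 2 0 - a 0 0)^2 + c11 * ((a 2 0 - a 0 0) * (a 2 1 - a 0 1))
      + c02 * (a 2 1 - a 0 1)^2 = 0 := by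
    linear_combination 2*hE0 + 2*hE2 - 4*hM02
  have hQw : c20 * (a 2 0 - a 1 0)^2 + c11 * ((a 2 0 - a 1 0) * (a 2 1 - a 1 1))
      + c02 * (a 2 1 - a 1 1)^2 = 0 := by
    linear_combination 2*hE1 + 2*hE2 - 4*hM12
  set u0 := a 1 0 - a 0 0
  set u1 := a 1 1 - a 0 1
  set v0 := a 2 0 - a 0 0
  set v1 := a 2 1 - a 0 1
  have hD : u0 * v1 - u1 * v0 ≠ 0 := det_ne a hindep
  have hD2 : (u0 * v1 - u1 * v0)^2 ≠ 0 := pow_ne_zero _ hD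
  have hc20 : c20 = 0 := by
    have h : c20 * (u0 * v1 - u1 * v0)^2 = 0 := by
      linear_combination (v1^2 - u1*v1)*hQu + (u1^2 - u1*v1)*hQv + (u1*v1)*hQw
    exact (mul_eq_zero.mp h).resolve_right hD2
  have hc02 : c02 = 0 := by
    have h : c02 * (u0 * v1 - u1 * v0)^2 = 0 := by
      linear_combination (v0^2 - u0*v0)*hQu + (u0^2 - u0*v0)*hQv + (u0*v0)*hQw
    exact (mul_eq_zero.mp h).resolve_right hD2
  have hc11 : c11 = 0 := by
    have h : c11 * (u0 * v1 - u1 * v0)^2 = 0 := by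
      linear_combination (-2*v0*v1 + u1*v0 + u0*v1)*hQu + (-2*u0*u1 + u1*v0 + u0*v1)*hQv
        - (u1*v0 + u0*v1)*hQw
    exact (mul_eq_zero.mp h).resolve_right hD2
  have hL1 : c10 * u0 + c01 * u1 = 0 := by
    linear_combination hE1 - hE0 + (a 0 0^2 - a 1 0^2)*hc20
      + (a 0 0 * a 0 1 - a 1 0 * a 1 1)*hc11 + (a 0 1^2 - a 1 1^2)*hc02
  have hL2 : c10 * v0 + c01 * v1 = 0 := by
    linear_combination hE2 - hE0 + (a 0 0^2 - a 2 0^2)*hc20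
      + (a 0 0 * a 0 1 - a 2 0 * a 2 1)*hc11 + (a 0 1^2 - a 2 1^2)*hc02
  have hc10 : c10 = 0 := by
    have h : c10 * (u0 * v1 - u1 * v0) = 0 := by
      linear_combination v1*hL1 - u1*hL2
    exact (mul_eq_zero.mp h).resolve_right hD
  have hc01 : c01 = 0 := by
    have h : c01 * (u0 * v1 - u1 * v0) = 0 := by
      linear_combination u0*hL2 - v0*hL1
    exact (mul_eq_zero.mp h).resolve_right hD
  have hc00 : c00 = 0 := by
    linear_combination hE0 - (a 0 0)*hc10 - (a 0 1)*hc01 - (a 0 0^2)*hc20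
      - (a 0 0 * a 0 1)*hc11 - (a 0 1^2)*hc02
  apply zeroform p hdeg
  intro i j hij
  have hi : i ≤ 2 := by omega
  have hj : j ≤ 2 := by omega
  interval_cases i <;> interval_cases j <;> first
    | exact hc00 | exact hc10 | exact hc01 | exact hc20 | exact hc11 | exact hc02 | omega
end
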